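/- If the injective map g from the pre-colored graph G' into the construction graph G preserves and reflects adjacency (i.e., g embeds G' as an induced subgraph), then g(c') = c, where c is the unique vertex of G adjacent to all of A ∪ B, provided that c is the vertex of strictly maximal degree in G. -/

import Mathlib

/-- Abstract form of Lemma 1: if `g` embeds `G'` into `G` as an induced
subgraph, `c` is a vertex of strictly maximal degree in `G`, and the
distinguished vertex `c'` of `G'` has the same degree as `c`, then
`g(c') = c`. -/
theorem embedding_maps_max_degree_vertex
    {V W : Type} [Fintype V] [Fintype W]
    (G : SimpleGraph V) (G' : SimpleGraph W)
    [DecidableRel G.Adj] [DecidableRel G'.Adj]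
    (c : V) (hc : ∀ v, v ≠ c → G.degree v < G.degree c)
    (c' : W) (hdeg : G'.degree c' = G.degree c)
    (g : W → V) (hinj : Function.Injective g)
    (hadj : ∀ u v, G'.Adj u v ↔ G.Adj (g u) (g v)) :
    g c' = c := by
  by_contra h
  have hlt := hc (g c') h
  have hle : G'.degree c' ≤ G.degree (g c') := by
    unfold SimpleGraph.degree
    apply Finset.card_le_card_of_injOn g
    · intro u hu
      simp only [Finset.mem_coe, SimpleGraph.mem_neighborFinset] at *
      exact (hadj c' u).mp hu
    · exact fun a _ b _ hab => hinj hab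
  omega
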